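/- For the choice a_L = log(1 + αβL) with 0 < α < 1 and β > 0, we have 1 − r_L = −(log α)/log L + O(1/(log L)²) as L → ∞, where r_L = [log(1 + αβL)/log(1 + βL)] · Q(mL, αmL); in particular the convergence of r_L to 1 is Θ(1/log L). -/

import Mathlib

open Filter Asymptotics

noncomputable def upperIncGamma (a x : ℝ) : ℝ :=
  ∫ t in Set.Ioi x, t ^ (a - 1) * Real.exp (-t)

noncomputable def normUpperIncGamma (a x : ℝ) : ℝ :=
  upperIncGamma a x / Real.Gamma a

noncomputable def rL (α β m L : ℝ) : ℝ :=
  (Real.log (1 + α * β * L) / Real.log (1 + β * L)) *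
    normUpperIncGamma (m * L) (α * m * L)

section Aux

set_option maxHeartbeats 1000000

open MeasureTheory Set

lemma integrandInt {a : ℝ} (ha : 0 < a) :
    IntegrableOn (fun t : ℝ => t ^ (a - 1) * Real.exp (-t)) (Set.Ioi 0) := by
  have := Real.GammaIntegral_convergent ha
  simpa [mul_comm] using this

lemma gamma_split {a x : ℝ} (ha : 0 < a) (hx : 0 < x) :
    Real.Gamma a = (∫ t in Set.Ioc 0 x, t ^ (a - 1) * Real.exp (-t)) + upperIncGamma a x := by
  rw [Real.Gamma_eq_integral ha]
  have h1 : (∫ t in Set.Ioi (0:ℝ), Real.exp (-t) * t ^ (a - 1))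
      = ∫ t in Set.Ioi (0:ℝ), t ^ (a - 1) * Real.exp (-t) := by
    congr 1; ext t; ring
  rw [h1, ← Set.Ioc_union_Ioi_eq_Ioi hx.le,
    setIntegral_union (Set.Ioc_disjoint_Ioi le_rfl) measurableSet_Ioi
      ((integrandInt ha).mono_set Set.Ioc_subset_Ioi_self)
      ((integrandInt ha).mono_set (Set.Ioi_subset_Ioi hx.le))]
  rfl

lemma lower_nonneg {a x : ℝ} :
    0 ≤ ∫ t in Set.Ioc 0 x, t ^ (a - 1) * Real.exp (-t) := by
  apply setIntegral_nonneg measurableSet_Ioc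
  intro t ht
  exact mul_nonneg (Real.rpow_nonneg (le_of_lt ht.1) _) (Real.exp_pos _).le

lemma upper_nonneg {a x : ℝ} (hx : 0 < x) : 0 ≤ upperIncGamma a x := by
  apply setIntegral_nonneg measurableSet_Ioi
  intro t ht
  exact mul_nonneg (Real.rpow_nonneg (hx.trans ht).le _) (Real.exp_pos _).le

lemma Q_le_one {a x : ℝ} (ha : 0 < a) (hx : 0 < x) : normUpperIncGamma a x ≤ 1 := by
  rw [normUpperIncGamma, div_le_one (Real.Gamma_pos_of_pos ha)]
  rw [gamma_split ha hx]
  linarith [lower_nonneg (a := a) (x := x)]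

lemma Q_nonneg {a x : ℝ} (ha : 0 < a) (hx : 0 < x) : 0 ≤ normUpperIncGamma a x :=
  div_nonneg (upper_nonneg hx) (Real.Gamma_pos_of_pos ha).le

lemma pointwise_le {a x t : ℝ} (ht : 0 < t) (htx : t ≤ x) (hxa : x ≤ a - 1) :
    t ^ (a - 1) * Real.exp (-t) ≤ x ^ (a - 1) * Real.exp (-x) := by
  have hx : 0 < x := lt_of_lt_of_le ht htx
  have h1 : Real.log (t / x) ≤ t / x - 1 := Real.log_le_sub_one_of_pos (div_pos ht hx)
  rw [Real.log_div ht.ne' hx.ne'] at h1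
  have key : x - t ≤ (a - 1) * (Real.log x - Real.log t) := by
    have h2 : (x - t) / x ≤ Real.log x - Real.log t := by
      rw [div_le_iff₀ hx]
      have h1' := mul_le_mul_of_nonneg_right h1 hx.le
      have hc : (t / x - 1) * x = t - x := by field_simp
      rw [hc] at h1'
      linarith
    calc x - t = x * ((x - t)/x) := by field_simp
    _ ≤ x * (Real.log x - Real.log t) := by
        apply mul_le_mul_of_nonneg_left h2 hx.le
    _ ≤ (a - 1) * (Real.log x - Real.log t) := by
        apply mul_le_mul_of_nonneg_right (by linarith)
        nlinarith [h2, div_nonneg (by linarith : (0:ℝ) ≤ x - t) hx.le]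
  have e1 : t ^ (a - 1) * Real.exp (-t) = Real.exp ((a-1) * Real.log t - t) := by
    rw [Real.rpow_def_of_pos ht, ← Real.exp_add]
    congr 1; ring
  have e2 : x ^ (a - 1) * Real.exp (-x) = Real.exp ((a-1) * Real.log x - x) := by
    rw [Real.rpow_def_of_pos hx, ← Real.exp_add]
    congr 1; ring
  rw [e1, e2]
  apply Real.exp_le_exp.2
  nlinarith [key]

lemma lower_le {a x : ℝ} (hx : 0 < x) (hxa : x ≤ a - 1) :
    (∫ t in Set.Ioc 0 x, t ^ (a - 1) * Real.exp (-t)) ≤ x ^ a * Real.exp (-x) := by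
  have ha : 0 < a := by nlinarith
  have h : (∫ t in Set.Ioc 0 x, t ^ (a - 1) * Real.exp (-t))
      ≤ ∫ _ in Set.Ioc 0 x, x ^ (a - 1) * Real.exp (-x) := by
    apply setIntegral_mono_on
    · exact (integrandInt ha).mono_set Set.Ioc_subset_Ioi_self
    · exact integrableOn_const (by simp [hx.le])
    · exact measurableSet_Ioc
    · intro t ht
      exact pointwise_le ht.1 ht.2 hxa
  rw [setIntegral_const] at h
  have : volume.real (Set.Ioc (0:ℝ) x) = x := by simp [measureReal_def, hx.le]
  rw [this] at h
  calc (∫ t in Set.Ioc 0 x, t ^ (a - 1) * Real.exp (-t))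
      ≤ x • (x ^ (a-1) * Real.exp (-x)) := h
    _ = x ^ a * Real.exp (-x) := by
        rw [smul_eq_mul, ← mul_assoc]
        congr 1
        calc x * x ^ (a-1) = x ^ (1:ℝ) * x ^ (a-1) := by rw [Real.rpow_one]
          _ = x ^ (1 + (a-1)) := (Real.rpow_add hx _ _).symm
          _ = x ^ a := by norm_num

lemma gamma_ge {a : ℝ} (ha : 1 ≤ a) :
    a ^ (a - 1) * Real.exp (-(a + 1)) ≤ Real.Gamma a := by
  have ha0 : 0 < a := by linarith
  have h0 : Real.Gamma a = ∫ t in Set.Ioi (0:ℝ), t ^ (a - 1) * Real.exp (-t) := by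
    rw [Real.Gamma_eq_integral ha0]
    congr 1; ext t; ring
  rw [h0]
  have hsub : (∫ t in Set.Ioc a (a+1), t ^ (a - 1) * Real.exp (-t))
      ≤ ∫ t in Set.Ioi (0:ℝ), t ^ (a - 1) * Real.exp (-t) := by
    apply setIntegral_mono_set (integrandInt ha0)
    · filter_upwards [ae_restrict_mem measurableSet_Ioi] with t ht
      exact mul_nonneg (Real.rpow_nonneg (le_of_lt ht) _) (Real.exp_pos _).le
    · filter_upwards with t ht
      exact lt_of_lt_of_le ha0 (le_of_lt ht.1)
  refine le_trans ?_ hsub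
  have hpt : ∀ t ∈ Set.Ioc a (a+1),
      a ^ (a - 1) * Real.exp (-(a + 1)) ≤ t ^ (a - 1) * Real.exp (-t) := by
    intro t ht
    apply mul_le_mul
    · exact Real.rpow_le_rpow ha0.le ht.1.le (by linarith)
    · exact Real.exp_le_exp.2 (by linarith [ht.2])
    · exact (Real.exp_pos _).le
    · exact Real.rpow_nonneg (by linarith [ht.1]) _
  have h2 : (∫ _ in Set.Ioc a (a+1), a ^ (a - 1) * Real.exp (-(a+1)))
      ≤ ∫ t in Set.Ioc a (a+1), t ^ (a - 1) * Real.exp (-t) := by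
    apply setIntegral_mono_on
    · exact integrableOn_const (by simp)
    · exact (integrandInt ha0).mono_set (fun t ht => lt_of_lt_of_le ha0 ht.1.le)
    · exact measurableSet_Ioc
    · exact hpt
  rw [setIntegral_const] at h2
  have hv : volume.real (Set.Ioc a (a+1)) = 1 := by simp [measureReal_def]
  rw [hv, one_smul] at h2
  exact h2

lemma one_sub_Q_le {α a : ℝ} (hα0 : 0 < α) (hα1 : α < 1) (ha : 1 ≤ a)
    (hxa : α * a ≤ a - 1) :
    1 - normUpperIncGamma a (α * a) ≤ Real.exp 1 * a * (α * Real.exp (1 - α)) ^ a := by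
  have ha0 : 0 < a := by linarith
  have hx : 0 < α * a := mul_pos hα0 ha0
  have hΓ : 0 < Real.Gamma a := Real.Gamma_pos_of_pos ha0
  have hden : 0 < a ^ (a - 1) * Real.exp (-(a + 1)) :=
    mul_pos (Real.rpow_pos_of_pos ha0 _) (Real.exp_pos _)
  have h1 : 1 - normUpperIncGamma a (α * a)
      = (∫ t in Set.Ioc 0 (α*a), t ^ (a - 1) * Real.exp (-t)) / Real.Gamma a := by
    rw [normUpperIncGamma]
    field_simp
    rw [gamma_split ha0 hx]
    ring
  rw [h1]
  have h2 : (∫ t in Set.Ioc 0 (α*a), t ^ (a - 1) * Real.exp (-t)) / Real.Gamma a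
      ≤ ((α*a) ^ a * Real.exp (-(α*a))) / (a ^ (a - 1) * Real.exp (-(a + 1))) := by
    apply div_le_div₀ (by positivity) (lower_le hx hxa) hden (gamma_ge ha)
  refine h2.trans (le_of_eq ?_)
  rw [Real.mul_rpow hα0.le ha0.le]
  rw [eq_comm]
  have hstep : Real.exp 1 * a * (α * Real.exp (1 - α)) ^ a
      = α ^ a * (a ^ a / a ^ (a-1)) * (Real.exp (-(α*a)) / Real.exp (-(a+1))) := by
    rw [Real.mul_rpow hα0.le (Real.exp_pos _).le, ← Real.exp_mul,
      ← Real.rpow_sub ha0, ← Real.exp_sub]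
    have : a - (a - 1) = (1:ℝ) := by ring
    rw [this, Real.rpow_one]
    have : -(α * a) - -(a + 1) = (1-α)*a + 1 := by ring
    rw [this, Real.exp_add]
    ring
  rw [hstep]
  field_simp

lemma logsq_le : ∀ᶠ L : ℝ in atTop, (Real.log L)^2 ≤ 4 * L := by
  filter_upwards [eventually_ge_atTop (1:ℝ)] with L hL
  have hL0 : (0:ℝ) < L := by linarith
  have hs : Real.log L = 2 * Real.log (Real.sqrt L) := by
    rw [Real.log_sqrt hL0.le]; ring
  have h1 : Real.log (Real.sqrt L) ≤ Real.sqrt L - 1 :=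
    Real.log_le_sub_one_of_pos (Real.sqrt_pos.2 hL0)
  have h2 : (0:ℝ) ≤ Real.log L := Real.log_nonneg hL
  have h3 : Real.sqrt L ^ 2 = L := Real.sq_sqrt hL0.le
  have h4 : (1:ℝ) ≤ Real.sqrt L := by
    rw [show (1:ℝ) = Real.sqrt 1 by simp]
    exact Real.sqrt_le_sqrt hL
  nlinarith [h1, h2, h3, h4, hs]

lemma one_div_bigO : (fun L : ℝ => 1 / L) =O[atTop] (fun L => 1 / (Real.log L)^2) := by
  rw [Asymptotics.isBigO_iff]
  refine ⟨4, ?_⟩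
  filter_upwards [logsq_le, eventually_ge_atTop (2:ℝ)] with L h1 h2
  have hL0 : (0:ℝ) < L := by linarith
  have hlog : 0 < Real.log L := Real.log_pos (by linarith)
  simp only [Real.norm_eq_abs]
  rw [abs_of_pos (by positivity), abs_of_pos (by positivity)]
  have he : 4 * (1/(Real.log L)^2) = 4/(Real.log L)^2 := by ring
  rw [he, div_le_div_iff₀ hL0 (by positivity)]
  nlinarith [h1]

lemma exp_decay_littleO {m q : ℝ} (hm : 0 < m) (hq0 : 0 < q) (hq1 : q < 1) :
    (fun L : ℝ => Real.exp 1 * (m * L) * q ^ (m * L)) =o[atTop] (fun L => 1 / L) := by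
  have hc : (0:ℝ) < -(m * Real.log q) := by
    have : Real.log q < 0 := Real.log_neg hq0 hq1
    nlinarith
  set c := -(m * Real.log q) with hcdef
  have hbase : Filter.Tendsto (fun L : ℝ => (c * L)^2 * Real.exp (-(c * L))) atTop (nhds 0) := by
    have h0 := Real.tendsto_pow_mul_exp_neg_atTop_nhds_zero 2
    have h1 : Filter.Tendsto (fun L : ℝ => c * L) atTop atTop :=
      Filter.Tendsto.const_mul_atTop hc tendsto_id
    exact h0.comp h1
  have hmain : Filter.Tendsto (fun L : ℝ => Real.exp 1 * (m * L) * q ^ (m * L) * L)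
      atTop (nhds 0) := by
    have h2 : Filter.Tendsto (fun L : ℝ => (Real.exp 1 * m / c^2) * ((c*L)^2 * Real.exp (-(c*L))))
        atTop (nhds 0) := by
      have := hbase.const_mul (Real.exp 1 * m / c^2)
      simpa using this
    apply h2.congr'
    filter_upwards [eventually_gt_atTop (0:ℝ)] with L hL
    have hq : q ^ (m * L) = Real.exp (-(c * L)) := by
      rw [Real.rpow_def_of_pos hq0]
      congr 1
      rw [hcdef]; ring
    rw [hq]
    field_simp
  rw [Asymptotics.isLittleO_iff_tendsto']
  · apply hmain.congr'
    filter_upwards [eventually_gt_atTop (0:ℝ)] with L hL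
    field_simp
  · filter_upwards [eventually_gt_atTop (0:ℝ)] with L hL h
    exact absurd h (by positivity)

lemma ratio_asym {α β : ℝ} (hα0 : 0 < α) (hα1 : α < 1) (hβ : 0 < β) :
    (fun L : ℝ => (1 - Real.log (1 + α*β*L) / Real.log (1 + β*L)) - (-Real.log α / Real.log L))
      =O[atTop] (fun L => 1 / (Real.log L)^2) := by
  set c : ℝ := -Real.log α with hc
  have hc0 : 0 < c := by
    have := Real.log_neg hα0 hα1
    simp only [hc]; linarith
  set C : ℝ := 2*c*(|Real.log β|+1) + 2/(α*β) with hC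
  rw [Asymptotics.isBigO_iff]
  refine ⟨C, ?_⟩
  filter_upwards [eventually_ge_atTop (max 1 (1/β)),
    Real.tendsto_log_atTop.eventually_ge_atTop (2*(|Real.log β|+1))] with L hL1 hlgE
  have hL : (1:ℝ) ≤ L := le_trans (le_max_left _ _) hL1
  have hL0 : (0:ℝ) < L := by linarith
  have hβL : (1:ℝ) ≤ β * L := by
    have h := le_trans (le_max_right _ _) hL1
    rw [div_le_iff₀ hβ] at h
    nlinarith
  set lg : ℝ := Real.log L with hlg
  have hlg2 : 2 ≤ lg := by
    have h1 : (0:ℝ) ≤ |Real.log β| := abs_nonneg _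
    nlinarith [hlgE, abs_nonneg (Real.log β)]
  have hlg0 : 0 < lg := by linarith
  have hlgL : lg ≤ L := by
    have := Real.log_le_sub_one_of_pos hL0
    simp only [hlg]; linarith
  set A : ℝ := Real.log (1 + α*β*L) with hA
  set B : ℝ := Real.log (1 + β*L) with hB
  have hβL0 : 0 < β * L := by linarith
  have hαβL0 : 0 < α * β * L := by positivity
  have hlogm : Real.log (β*L) = Real.log β + lg := Real.log_mul hβ.ne' hL0.ne'
  have hE1 : Real.log β + lg ≤ B := by
    rw [← hlogm]
    exact Real.log_le_log hβL0 (by linarith)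
  have hE2 : B ≤ Real.log β + lg + 1 := by
    have hq : (1 + β*L)/(β*L) = 1 + 1/(β*L) := by field_simp; ring
    have h2 : Real.log ((1+β*L)/(β*L)) ≤ (1+β*L)/(β*L) - 1 :=
      Real.log_le_sub_one_of_pos (by positivity)
    rw [Real.log_div (by linarith) hβL0.ne', hlogm, hq] at h2
    have h3 : 1/(β*L) ≤ 1 := by rw [div_le_one hβL0]; linarith
    simp only [hB]
    linarith
  have hBlg : |B - lg| ≤ |Real.log β| + 1 := by
    rw [abs_le]
    constructor
    · have := neg_abs_le (Real.log β); linarith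
    · have := le_abs_self (Real.log β); linarith
  have hBge : lg/2 ≤ B := by
    have := neg_abs_le (Real.log β)
    linarith [hlgE, hE1]
  have hB0 : 0 < B := by linarith
  set u : ℝ := α*(1+β*L)/(1+α*β*L) with hu
  have hu0 : 0 < u := by positivity
  have hu1 : u < 1 := by
    rw [hu, div_lt_one (by positivity)]
    nlinarith
  have hlogu : Real.log u = Real.log α + B - A := by
    rw [hu, Real.log_div (by positivity) (by linarith), Real.log_mul hα0.ne' (by linarith)]
  have hlogu_le : Real.log u ≤ 0 := Real.log_nonpos hu0.le hu1.le
  have hlogu_ge : -(1/(α*β*L)) ≤ Real.log u := by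
    have h1 : Real.log u⁻¹ ≤ u⁻¹ - 1 := Real.log_le_sub_one_of_pos (by positivity)
    rw [Real.log_inv] at h1
    have h2 : u⁻¹ - 1 ≤ 1/(α*β*L) := by
      rw [hu]
      rw [inv_div]
      have hd : (1+α*β*L)/(α*(1+β*L)) - 1 = (1-α)/(α*(1+β*L)) := by
        field_simp
        ring
      rw [hd, div_le_div_iff₀ (by positivity) (by positivity)]
      nlinarith
    linarith
  have hA_eq : A = B - c - Real.log u := by
    rw [hlogu, hc]; ring
  have hgoal : (1 - A / B) - (-Real.log α / lg) = c*(lg - B)/(B*lg) + Real.log u / B := by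
    rw [hA_eq, hc]
    field_simp
    ring
  simp only [Real.norm_eq_abs]
  rw [hgoal]
  have hb1 : |c*(lg - B)/(B*lg)| ≤ c*(|Real.log β|+1)/((lg/2)*lg) := by
    rw [abs_div, abs_mul, abs_of_pos hc0, abs_of_pos (by positivity : (0:ℝ) < B*lg)]
    apply div_le_div₀ (by positivity) _ (by positivity) _
    · apply mul_le_mul_of_nonneg_left _ hc0.le
      rw [abs_sub_comm]; exact hBlg
    · exact mul_le_mul_of_nonneg_right hBge hlg0.le
  have hb2 : |Real.log u / B| ≤ (1/(α*β*L))/(lg/2) := by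
    rw [abs_div, abs_of_pos hB0]
    apply div_le_div₀ (by positivity) _ (by positivity) hBge
    rw [abs_le]
    constructor <;> linarith
  have habs : |c*(lg - B)/(B*lg) + Real.log u / B| ≤
      c*(|Real.log β|+1)/((lg/2)*lg) + (1/(α*β*L))/(lg/2) :=
    le_trans (abs_add_le _ _) (add_le_add hb1 hb2)
  refine habs.trans ?_
  have hrhs : C * |1/lg^2| = C / lg^2 := by
    rw [abs_of_pos (by positivity : (0:ℝ) < 1/lg^2), mul_one_div]
  rw [hrhs]
  have ht1 : c*(|Real.log β|+1)/((lg/2)*lg) = 2*c*(|Real.log β|+1)/lg^2 := by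
    rw [div_eq_div_iff (by positivity) (by positivity)]
    ring
  have ht2' : (1/(α*β*L))/(lg/2) ≤ (2/(α*β))/lg^2 := by
    rw [div_le_div_iff₀ (by positivity) (by positivity)]
    have hkey : lg^2 ≤ L * lg := by nlinarith
    have h5 : (2/(α*β)) * (α*β*L) = 2*L := by field_simp
    calc 1/(α*β*L) * lg^2 ≤ 1/(α*β*L) * (L*lg) := by
          apply mul_le_mul_of_nonneg_left hkey (by positivity)
      _ = 2/(α*β) * (L*lg) * (1/(2*L)) * lg⁻¹ * lg := by
          field_simp
      _ = 2/(α*β) * (lg/2) := by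
          field_simp
  have hfin : c*(|Real.log β|+1)/((lg/2)*lg) + (1/(α*β*L))/(lg/2)
      ≤ 2*c*(|Real.log β|+1)/lg^2 + (2/(α*β))/lg^2 := by
    rw [ht1]
    linarith [ht2']
  refine hfin.trans (le_of_eq ?_)
  rw [← add_div, hC]

end Aux

theorem rL_convergence_rate (α β m : ℝ) (hα0 : 0 < α) (hα1 : α < 1)
    (hβ : 0 < β) (hm : 0 < m) :
    ((fun L : ℝ => (1 - rL α β m L) - (-(Real.log α) / Real.log L)) =O[atTop]
      fun L : ℝ => 1 / (Real.log L) ^ 2) ∧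
    ((fun L : ℝ => 1 - rL α β m L) =Θ[atTop] fun L : ℝ => 1 / Real.log L) := by
  set q : ℝ := α * Real.exp (1 - α) with hq
  have hq0 : 0 < q := by positivity
  have hq1 : q < 1 := by
    have hlog : Real.log α < α - 1 := Real.log_lt_sub_one_of_pos hα0 hα1.ne
    have : q = Real.exp (Real.log α + (1 - α)) := by
      rw [Real.exp_add, Real.exp_log hα0, hq]
    rw [this]
    have : Real.log α + (1 - α) < 0 := by linarith
    calc Real.exp (Real.log α + (1 - α)) < Real.exp 0 := Real.exp_lt_exp.2 this
      _ = 1 := Real.exp_zero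
  -- bound on 1 - Q
  have hQbound : ∀ᶠ L : ℝ in atTop,
      0 ≤ 1 - normUpperIncGamma (m*L) (α*m*L) ∧
      1 - normUpperIncGamma (m*L) (α*m*L) ≤ Real.exp 1 * (m*L) * q ^ (m*L) := by
    filter_upwards [eventually_ge_atTop (max (1/m) (1/((1-α)*m)))] with L hL
    have h1m : 1/m ≤ L := le_trans (le_max_left _ _) hL
    have h2m : 1/((1-α)*m) ≤ L := le_trans (le_max_right _ _) hL
    have hma : 0 < (1-α)*m := by nlinarith
    have ha1 : (1:ℝ) ≤ m * L := by
      rw [div_le_iff₀ hm] at h1m; nlinarith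
    have hxa : α * (m*L) ≤ m*L - 1 := by
      rw [div_le_iff₀ hma] at h2m; nlinarith
    have hL0 : 0 < L := by
      have : (0:ℝ) < 1/m := by positivity
      linarith
    have hassoc : α * m * L = α * (m * L) := by ring
    constructor
    · rw [hassoc]
      have := Q_le_one (a := m*L) (x := α*(m*L)) (by linarith) (by positivity)
      linarith
    · rw [hassoc]
      exact one_sub_Q_le hα0 hα1 ha1 hxa
  -- 1 - Q is O(1/log^2)
  have hQO : (fun L : ℝ => 1 - normUpperIncGamma (m*L) (α*m*L)) =O[atTop]
      (fun L => 1 / (Real.log L)^2) := by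
    have step1 : (fun L : ℝ => 1 - normUpperIncGamma (m*L) (α*m*L)) =O[atTop]
        (fun L => Real.exp 1 * (m*L) * q ^ (m*L)) := by
      rw [Asymptotics.isBigO_iff]
      refine ⟨1, ?_⟩
      filter_upwards [hQbound] with L hb
      simp only [Real.norm_eq_abs, one_mul]
      rw [abs_of_nonneg hb.1]
      exact hb.2.trans (le_abs_self _)
    exact step1.trans (((exp_decay_littleO hm hq0 hq1).isBigO).trans one_div_bigO)
  -- f is bounded by 1 eventually
  have hfb : ∀ᶠ L : ℝ in atTop,
      |Real.log (1 + α*β*L) / Real.log (1 + β*L)| ≤ 1 := by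
    filter_upwards [eventually_ge_atTop (max 1 (1/β))] with L hL
    have hL1 : (1:ℝ) ≤ L := le_trans (le_max_left _ _) hL
    have hβL : (1:ℝ) ≤ β*L := by
      have h := le_trans (le_max_right _ _) hL
      rw [div_le_iff₀ hβ] at h; nlinarith
    have hL0 : (0:ℝ) < L := by linarith
    have hA0 : 0 ≤ Real.log (1 + α*β*L) := Real.log_nonneg (by nlinarith)
    have hB0 : 0 < Real.log (1 + β*L) := Real.log_pos (by linarith)
    have hAB : Real.log (1 + α*β*L) ≤ Real.log (1 + β*L) :=
      Real.log_le_log (by nlinarith) (by nlinarith)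
    rw [abs_div, abs_of_nonneg hA0, abs_of_pos hB0, div_le_one hB0]
    exact hAB
  -- f * (1 - Q) is O(1/log^2)
  have hfQ : (fun L : ℝ => (Real.log (1 + α*β*L) / Real.log (1 + β*L)) *
      (1 - normUpperIncGamma (m*L) (α*m*L))) =O[atTop] (fun L => 1 / (Real.log L)^2) := by
    refine IsBigO.trans ?_ hQO
    rw [Asymptotics.isBigO_iff]
    refine ⟨1, ?_⟩
    filter_upwards [hfb] with L hb
    simp only [Real.norm_eq_abs, one_mul, abs_mul]
    exact mul_le_of_le_one_left (abs_nonneg _) hb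
  have part1 : (fun L : ℝ => (1 - rL α β m L) - (-(Real.log α) / Real.log L)) =O[atTop]
      fun L : ℝ => 1 / (Real.log L) ^ 2 := by
    have hsum := (ratio_asym hα0 hα1 hβ).add hfQ
    refine hsum.congr_left ?_
    intro L
    rw [rL]
    ring
  refine ⟨part1, ?_⟩
  -- Theta part
  set c : ℝ := -Real.log α with hc
  have hc0 : 0 < c := by
    have := Real.log_neg hα0 hα1
    simp only [hc]; linarith
  constructor
  · -- upper bound: 1 - rL = O(1/log)
    have hmain : (fun L : ℝ => -(Real.log α) / Real.log L) =O[atTop]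
        (fun L => 1 / Real.log L) := by
      rw [Asymptotics.isBigO_iff]
      refine ⟨c, ?_⟩
      filter_upwards with L
      simp only [Real.norm_eq_abs]
      rw [div_eq_mul_one_div (-(Real.log α)), abs_mul]
      apply mul_le_mul_of_nonneg_right _ (abs_nonneg _)
      rw [← hc, abs_of_pos hc0]
    have hsq : (fun L : ℝ => 1 / (Real.log L)^2) =O[atTop] (fun L => 1 / Real.log L) := by
      rw [Asymptotics.isBigO_iff]
      refine ⟨1, ?_⟩
      filter_upwards [Real.tendsto_log_atTop.eventually_ge_atTop (1:ℝ)] with L h1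
      have h0 : (0:ℝ) < Real.log L := by linarith
      simp only [Real.norm_eq_abs, one_mul]
      rw [abs_of_pos (by positivity), abs_of_pos (by positivity),
        div_le_div_iff₀ (by positivity) h0]
      nlinarith
    have := (part1.trans hsq).add hmain
    refine this.congr_left ?_
    intro L
    ring
  · -- lower bound: 1/log = O(1 - rL)
    obtain ⟨C', hC'0, hOW⟩ := part1.exists_pos
    have hbnd := hOW.bound
    rw [Asymptotics.isBigO_iff]
    refine ⟨2/c, ?_⟩
    filter_upwards [hbnd, Real.tendsto_log_atTop.eventually_ge_atTop (max 1 (2*C'/c))]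
      with L hb hlgx
    set lg : ℝ := Real.log L with hlg
    have hlg1 : (1:ℝ) ≤ lg := le_trans (le_max_left _ _) hlgx
    have hlg0 : (0:ℝ) < lg := by linarith
    have hlgC : 2*C'/c ≤ lg := le_trans (le_max_right _ _) hlgx
    simp only [Real.norm_eq_abs] at hb ⊢
    have habs2 : |(1:ℝ)/lg^2| = 1/lg^2 := abs_of_pos (by positivity)
    rw [habs2] at hb
    have hdlow : c/lg - C'/lg^2 ≤ 1 - rL α β m L := by
      have h1 : -(C'*(1/lg^2)) ≤ (1 - rL α β m L) - (-(Real.log α) / lg) := by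
        have := neg_abs_le ((1 - rL α β m L) - (-(Real.log α) / lg))
        linarith [hb, this]
      have h2 : -(Real.log α) / lg = c/lg := by rw [hc]
      rw [h2] at h1
      have h3 : C'*(1/lg^2) = C'/lg^2 := by ring
      rw [h3] at h1
      linarith
    have hhalf : c/(2*lg) ≤ 1 - rL α β m L := by
      have h4 : C'/lg^2 ≤ c/(2*lg) := by
        rw [div_le_div_iff₀ (by positivity) (by positivity)]
        rw [div_le_iff₀ hc0] at hlgC
        nlinarith
      have h5 : c/lg - c/(2*lg) = c/(2*lg) := by
        field_simp
        ring
      linarith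
    have hpos : 0 < 1 - rL α β m L := lt_of_lt_of_le (by positivity) hhalf
    rw [abs_of_pos (by positivity : (0:ℝ) < 1/lg), abs_of_pos hpos]
    have key : 1/lg = (2/c) * (c/(2*lg)) := by
      field_simp
    rw [key]
    exact mul_le_mul_of_nonneg_left hhalf (by positivity)
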